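/- Let k be an algebraically closed field, let V₁ and V₂ be k-vector spaces of finite dimensions d₁ and d₂ respectively, and let g₁ ∈ GL(V₁), g₂ ∈ GL(V₂) satisfy g₁^p = 1 and g₂^p = 1 for some prime p. Let g = g₁ ⊗ g₂ denote the induced automorphism of V₁ ⊗_k V₂. Then for every ν ∈ k, dim ker(g − ν·id) ≤ min{ d₂ · max_{λ∈k} dim ker(g₁ − λ·id), d₁ · max_{μ∈k} dim ker(g₂ − μ·id) }. -/

import Mathlib

open Polynomial Module TensorProduct LinearMap

section Helpers

variable {k : Type*} [Field k] {V : Type*} [AddCommGroup V] [Module k V]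

lemma aeval_apply_eigen (f : Module.End k V) {μ : k} {x : V} (hx : f x = μ • x) (P : k[X]) :
    Polynomial.aeval f P x = P.eval μ • x := by
  have hpow : ∀ n : ℕ, (f ^ n) x = μ ^ n • x := by
    intro n; induction n with
    | zero => simp
    | succ n ih =>
        rw [pow_succ, pow_succ, Module.End.mul_apply, hx, map_smul, ih, smul_smul, mul_comm μ]
  induction P using Polynomial.induction_on' with
  | add p q hp hq => simp [hp, hq, add_smul]
  | monomial n a =>
      simp [aeval_monomial, Module.End.mul_apply, Module.algebraMap_end_apply, hpow, smul_smul,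
        eval_monomial, mul_comm]

lemma eigen_of_pow_eigen {p : ℕ} (hp : p ≠ 0) (hpk : (p : k) ≠ 0)
    (f : Module.End k V) (hf : f ^ p = 1) (μ : k) (N : ℕ) (x : V)
    (hx : ((f - μ • 1) ^ N) x = 0) : (f - μ • 1) x = 0 := by
  classical
  set A : k[X] := (X - C μ) ^ N with hA
  set B : k[X] := X ^ p - 1 with hBdef
  have halg : Polynomial.aeval f (X - C μ) = f - μ • 1 := by
    rw [map_sub, Polynomial.aeval_X, Polynomial.aeval_C]
    rfl
  have hB : Polynomial.aeval f B = 0 := by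
    rw [hBdef, map_sub, map_pow, Polynomial.aeval_X, map_one, hf, sub_self]
  have hsq : Squarefree B := (Polynomial.X_pow_sub_one_separable_iff.mpr hpk).squarefree
  have hAx : Polynomial.aeval f A x = 0 := by
    rw [hA, map_pow, halg]; exact hx
  set g : k[X] := EuclideanDomain.gcd A B with hg
  have hgx : Polynomial.aeval f g x = 0 := by
    rw [hg, EuclideanDomain.gcd_eq_gcd_ab A B, mul_comm A _, mul_comm B _, map_add, map_mul,
      map_mul, hB, mul_zero, LinearMap.add_apply, Module.End.mul_apply, hAx, map_zero,
      LinearMap.zero_apply, add_zero]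
  have hdvd : g ∣ (X - C μ) := by
    obtain ⟨e, he, hassoc⟩ :=
      (dvd_prime_pow (Polynomial.prime_X_sub_C μ) N).mp (EuclideanDomain.gcd_dvd_left A B)
    have he1 : e ≤ 1 := by
      by_contra hcon
      push_neg at hcon
      have h2 : (X - C μ) * (X - C μ) ∣ g := by
        have : (X - C μ) ^ 2 ∣ (X - C μ) ^ e := pow_dvd_pow _ hcon
        rw [sq] at this
        exact this.trans hassoc.symm.dvd
      exact Polynomial.not_isUnit_X_sub_C μ
        (hsq _ (h2.trans (EuclideanDomain.gcd_dvd_right A B)))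
    calc g ∣ (X - C μ) ^ e := hassoc.dvd
    _ ∣ (X - C μ) ^ 1 := pow_dvd_pow _ he1
    _ = X - C μ := pow_one _
  obtain ⟨h, hh⟩ := hdvd
  rw [← halg, hh, mul_comm, map_mul, Module.End.mul_apply, hgx, map_zero]

end Helpers
section Gen

variable {k : Type*} [Field k] {V : Type*} [AddCommGroup V] [Module k V]

lemma exists_generators [FiniteDimensional k V] [IsAlgClosed k]
    {p : ℕ} (hp : p.Prime) (f : Module.End k V) (hf : f ^ p = 1) :
    ∃ (m : ℕ) (v : Fin m → V),
      m ≤ (⨆ μ : k, Module.finrank k (LinearMap.ker (f - μ • 1))) ∧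
      Submodule.span k (Set.range fun z : ℕ × Fin m => (f ^ z.1) (v z.2)) = ⊤ := by
  classical
  rcases subsingleton_or_nontrivial V with hV | hV
  · exact ⟨0, fun i => i.elim0, Nat.zero_le _, Subsingleton.elim _ _⟩
  have hbdd : BddAbove (Set.range fun μ : k => Module.finrank k (LinearMap.ker (f - μ • 1))) := by
    refine ⟨Module.finrank k V, ?_⟩
    rintro _ ⟨μ, rfl⟩
    exact Submodule.finrank_le _
  by_cases hpk : (p : k) = 0
  · -- characteristic p case
    haveI : CharP k p := by
      have h1 : ringChar k ∣ p := ringChar.dvd hpk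
      rcases hp.eq_one_or_self_of_dvd _ h1 with h2 | h2
      · exact absurd h2 (CharP.ringChar_ne_one)
      · exact ringChar.of_eq h2
    haveI : Fact p.Prime := ⟨hp⟩
    haveI : CharP (Module.End k V) p := by
      have hinj : Function.Injective (algebraMap k (Module.End k V)) := by
        intro a b hab
        obtain ⟨x, hx⟩ := exists_ne (0 : V)
        have h5 := congrArg (fun g : Module.End k V => g x) hab
        simp only [Module.algebraMap_end_apply] at h5
        exact smul_left_injective k hx h5
      exact charP_of_injective_algebraMap hinj p
    have hu : (f - 1) ^ p = 0 := by
      rw [sub_pow_char_of_commute _ (Commute.one_right f), hf, one_pow, sub_self]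
    set u : Module.End k V := f - 1 with hudef
    set W : Submodule k V := LinearMap.range u with hW
    set m : ℕ := Module.finrank k (V ⧸ W) with hm
    let b : Basis (Fin m) k (V ⧸ W) := Module.finBasis k (V ⧸ W)
    let v : Fin m → V := fun i => Quotient.out (b i)
    have hqv : ∀ i, W.mkQ (v i) = b i := fun i => Quotient.out_eq (b i)
    refine ⟨m, v, ?_, ?_⟩
    · have h1 : m + Module.finrank k W = Module.finrank k V :=
        Submodule.finrank_quotient_add_finrank W
      have h2 : Module.finrank k W + Module.finrank k (LinearMap.ker u) = Module.finrank k V :=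
        LinearMap.finrank_range_add_finrank_ker u
      have hmm : m = Module.finrank k (LinearMap.ker (f - (1 : k) • 1)) := by
        rw [one_smul, ← hudef]; omega
      rw [hmm]
      exact le_ciSup hbdd (1 : k)
    · set M : Submodule k V :=
        Submodule.span k (Set.range fun z : ℕ × Fin m => (f ^ z.1) (v z.2)) with hM
      have hfM : ∀ x ∈ M, f x ∈ M := by
        have hmap : Submodule.map f M ≤ M := by
          rw [hM, Submodule.map_span, Submodule.span_le]
          rintro _ ⟨_, ⟨⟨n, i⟩, rfl⟩, rfl⟩
          refine Submodule.subset_span ⟨(n + 1, i), ?_⟩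
          simp [pow_succ', Module.End.mul_apply]
        exact fun x hx => hmap (Submodule.mem_map_of_mem hx)
      have huM : ∀ x ∈ M, u x ∈ M := by
        intro x hx
        have : u x = f x - x := by rw [hudef]; simp
        rw [this]
        exact sub_mem (hfM x hx) hx
      have hutM : ∀ (t : ℕ), ∀ x ∈ M, (u ^ t) x ∈ M := by
        intro t
        induction t with
        | zero => intro x hx; simpa using hx
        | succ t ih =>
            intro x hx
            rw [pow_succ, Module.End.mul_apply]
            exact ih (u x) (huM x hx)
      have hbase : ∀ x : V, x ∈ M ⊔ W := by
        have h1 : Submodule.map W.mkQ (Submodule.span k (Set.range v)) = ⊤ := by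
          rw [Submodule.map_span]
          have : W.mkQ '' Set.range v = Set.range b := by
            rw [← Set.range_comp]
            have h6 : W.mkQ ∘ v = b := funext hqv
            rw [h6]
          rw [this, b.span_eq]
        have h2 : Submodule.span k (Set.range v) ⊔ W = ⊤ := by
          have h3 := Submodule.comap_map_eq W.mkQ (Submodule.span k (Set.range v))
          rw [h1, Submodule.comap_top, Submodule.ker_mkQ] at h3
          exact h3.symm
        intro x
        have hx : x ∈ Submodule.span k (Set.range v) ⊔ W := h2 ▸ Submodule.mem_top
        refine sup_le_sup_right ?_ W hx
        rw [Submodule.span_le]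
        rintro _ ⟨i, rfl⟩
        exact Submodule.subset_span ⟨(0, i), by simp⟩
      have hstep : ∀ t : ℕ, ∀ x : V, x ∈ M ⊔ LinearMap.range (u ^ t) := by
        intro t
        induction t with
        | zero =>
            intro x
            refine Submodule.mem_sup.mpr ⟨0, zero_mem _, x, ?_, by simp⟩
            simp
        | succ t ih =>
            intro x
            obtain ⟨a, ha, y, hy, rfl⟩ := Submodule.mem_sup.mp (ih x)
            obtain ⟨y', rfl⟩ := hy
            obtain ⟨a', ha', z, hz, hsum⟩ := Submodule.mem_sup.mp (hbase y')
            obtain ⟨w, rfl⟩ := hz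
            refine Submodule.mem_sup.mpr
              ⟨a + (u ^ t) a', add_mem ha (hutM t a' ha'), (u ^ (t + 1)) w, ⟨w, rfl⟩, ?_⟩
            rw [← hsum, map_add, pow_succ, Module.End.mul_apply]
            abel
      have hfin := hstep p
      rw [hu] at hfin
      rw [eq_top_iff]
      intro x _
      have := hfin x
      simpa using this
  · -- characteristic ≠ p case
    have hmgen : ∀ μ : k, f.maxGenEigenspace μ ≤ LinearMap.ker (f - μ • 1) := by
      intro μ x hx
      obtain ⟨N, hN⟩ := (Module.End.mem_maxGenEigenspace f μ x).mp hx
      exact LinearMap.mem_ker.mpr (eigen_of_pow_eigen hp.ne_zero hpk f hf μ N x hN)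
    have htop : (⨆ μ : k, LinearMap.ker (f - μ • 1)) = ⊤ := by
      refine le_antisymm le_top ?_
      rw [← Module.End.iSup_maxGenEigenspace_eq_top f]
      exact iSup_mono hmgen
    set d : k → ℕ := fun μ => Module.finrank k (LinearMap.ker (f - μ • 1)) with hd
    set m : ℕ := ⨆ μ : k, d μ with hmdef
    have hdm : ∀ μ, d μ ≤ m := fun μ => le_ciSup hbdd μ
    set S : Finset k := (X ^ p - 1 : k[X]).roots.toFinset with hSdef
    have hBne : (X ^ p - 1 : k[X]) ≠ 0 := by
      have hmon := Polynomial.monic_X_pow_sub_C (1 : k) hp.ne_zero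
      rw [map_one] at hmon
      exact hmon.ne_zero
    have hS : ∀ μ : k, LinearMap.ker (f - μ • 1) ≠ ⊥ → μ ∈ S := by
      intro μ hne
      obtain ⟨x, hxker, hx0⟩ := (Submodule.ne_bot_iff _).mp hne
      have hfx : f x = μ • x := by
        have h7 := LinearMap.mem_ker.mp hxker
        rwa [LinearMap.sub_apply, LinearMap.smul_apply, Module.End.one_apply, sub_eq_zero] at h7
      have hpow : (f ^ p) x = μ ^ p • x := by
        have h8 := aeval_apply_eigen f hfx (X ^ p)
        simpa using h8
      rw [hf] at hpow
      have hμ : μ ^ p = 1 := by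
        by_contra hcon
        have h9 : (μ ^ p - 1) • x = 0 := by
          rw [sub_smul, one_smul, ← hpow]
          simp
        rcases smul_eq_zero.mp h9 with h | h
        · exact hcon (by linear_combination h)
        · exact hx0 h
      rw [hSdef, Multiset.mem_toFinset, Polynomial.mem_roots hBne]
      simp [Polynomial.IsRoot, hμ]
    let bb : (μ : k) → Basis (Fin (d μ)) k (LinearMap.ker (f - μ • 1)) :=
      fun μ => Module.finBasis k _
    set e : k → Fin m → V := fun μ i =>
      if h : (i : ℕ) < d μ then ((bb μ) ⟨i, h⟩ : V) else 0 with he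
    have he_mem : ∀ μ i, e μ i ∈ LinearMap.ker (f - μ • 1) := by
      intro μ i
      by_cases h : (i : ℕ) < d μ
      · rw [he]
        simp only [dif_pos h]
        exact ((bb μ) ⟨i, h⟩).2
      · rw [he]
        simp only [dif_neg h]
        exact zero_mem _
    have he_eig : ∀ μ i, f (e μ i) = μ • e μ i := by
      intro μ i
      have h10 := LinearMap.mem_ker.mp (he_mem μ i)
      rwa [LinearMap.sub_apply, LinearMap.smul_apply, Module.End.one_apply, sub_eq_zero] at h10
    set v : Fin m → V := fun i => ∑ μ ∈ S, e μ i with hv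
    refine ⟨m, v, le_rfl, ?_⟩
    set M := Submodule.span k (Set.range fun z : ℕ × Fin m => (f ^ z.1) (v z.2)) with hM
    have haevalM : ∀ (Q : k[X]) (i : Fin m), Polynomial.aeval f Q (v i) ∈ M := by
      intro Q i
      induction Q using Polynomial.induction_on' with
      | add a b hA hB => rw [map_add, LinearMap.add_apply]; exact add_mem hA hB
      | monomial n a =>
          have h11 : Polynomial.aeval f (monomial n a) (v i) = a • (f ^ n) (v i) := by
            simp [Polynomial.aeval_monomial, Module.End.mul_apply, Module.algebraMap_end_apply]
          rw [h11]
          exact Submodule.smul_mem _ _ (Submodule.subset_span ⟨(n, i), rfl⟩)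
    have key : ∀ μ₀ ∈ S, ∀ i, e μ₀ i ∈ M := by
      intro μ₀ hμ₀ i
      have hinj : Set.InjOn (_root_.id : k → k) S := Set.injOn_id _
      set P : k[X] := Lagrange.basis S _root_.id μ₀ with hP
      have hval : Polynomial.aeval f P (v i) = e μ₀ i := by
        have hsum : Polynomial.aeval f P (v i) = ∑ μ ∈ S, P.eval μ • e μ i := by
          rw [hv, map_sum]
          exact Finset.sum_congr rfl fun μ _ => aeval_apply_eigen f (he_eig μ i) P
        rw [hsum, Finset.sum_eq_single μ₀]
        · have h12 : P.eval μ₀ = 1 := Lagrange.eval_basis_self hinj hμ₀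
          rw [h12, one_smul]
        · intro μ hμ hne
          have h13 : P.eval μ = 0 := Lagrange.eval_basis_of_ne (v := (_root_.id : k → k)) hne.symm hμ
          rw [h13, zero_smul]
        · intro h
          exact absurd hμ₀ h
      rw [← hval]
      exact haevalM P i
    rw [eq_top_iff, ← htop]
    refine iSup_le fun μ => ?_
    by_cases hker : LinearMap.ker (f - μ • 1) = ⊥
    · rw [hker]
      exact bot_le
    · have hμS := hS μ hker
      intro x hx
      have h14 : x = ∑ j, ((bb μ).repr ⟨x, hx⟩ j) • ((bb μ) j : V) := by
        have h15 := congrArg (Submodule.subtype (LinearMap.ker (f - μ • 1))) ((bb μ).sum_repr ⟨x, hx⟩)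
        simp only [map_sum, map_smul, Submodule.subtype_apply] at h15
        exact h15.symm
      rw [h14]
      refine Submodule.sum_mem _ fun j _ => Submodule.smul_mem _ _ ?_
      have hlt : ((Fin.castLE (hdm μ) j : Fin m) : ℕ) < d μ := by simpa using j.isLt
      have hj : e μ (Fin.castLE (hdm μ) j) = ((bb μ) j : V) := by
        rw [he]
        simp only [dif_pos hlt]
        congr 1
      rw [← hj]
      exact key μ hμS _

end Gen
section OneSide

variable {k : Type*} [Field k]
variable {V₁ V₂ : Type*} [AddCommGroup V₁] [Module k V₁] [AddCommGroup V₂] [Module k V₂]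

lemma dualMap_pow (f : Module.End k V₁) (n : ℕ) :
    (f ^ n).dualMap = (f.dualMap) ^ n := by
  induction n with
  | zero => rw [pow_zero, pow_zero]; rfl
  | succ n ih =>
      rw [pow_succ' f n, Module.End.mul_eq_comp, ← LinearMap.dualMap_comp_dualMap, ih,
        ← Module.End.mul_eq_comp, ← pow_succ]

lemma dualMap_sub_smul_one (f : Module.End k V₁) (μ : k) :
    (f - μ • (1 : Module.End k V₁)).dualMap = f.dualMap - μ • 1 := by
  ext φ x
  simp [LinearMap.dualMap_apply]

lemma finrank_ker_dualMap [FiniteDimensional k V₁] (f : Module.End k V₁) :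
    Module.finrank k (LinearMap.ker f.dualMap) = Module.finrank k (LinearMap.ker f) := by
  have h1 := LinearMap.finrank_range_add_finrank_ker f.dualMap
  have h2 := LinearMap.finrank_range_add_finrank_ker f
  rw [LinearMap.finrank_range_dualMap_eq_finrank_range] at h1
  rw [Subspace.dual_finrank_eq] at h1
  omega

set_option maxHeartbeats 1000000 in
lemma oneside [IsAlgClosed k] [FiniteDimensional k V₁] [FiniteDimensional k V₂]
    {p : ℕ} (hp : p.Prime)
    (f₁ : Module.End k V₁) (f₂ : Module.End k V₂)
    (h₁ : f₁ ^ p = 1) (h₂ : f₂ ^ p = 1) :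
    Module.finrank k (LinearMap.ker (TensorProduct.map f₁ f₂ - 1)) ≤
      Module.finrank k V₂ * ⨆ μ : k, Module.finrank k (LinearMap.ker (f₁ - μ • 1)) := by
  classical
  set F : Module.End k (Module.Dual k V₁) := f₁.dualMap with hF
  have hFp : F ^ p = 1 := by
    rw [hF, ← dualMap_pow, h₁]
    rfl
  obtain ⟨m, ξ, hm, hspan⟩ := exists_generators hp F hFp
  have hsup : (⨆ μ : k, Module.finrank k (LinearMap.ker (F - μ • 1))) =
      ⨆ μ : k, Module.finrank k (LinearMap.ker (f₁ - μ • 1)) := by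
    refine iSup_congr fun μ => ?_
    rw [hF, ← dualMap_sub_smul_one, finrank_ker_dualMap]
  let Φ : (V₁ ⊗[k] V₂) ≃ₗ[k] (Module.Dual k V₁ →ₗ[k] V₂) :=
    (TensorProduct.congr (Module.evalEquiv k V₁) (LinearEquiv.refl k V₂)).trans
      (dualTensorHomEquiv k (Module.Dual k V₁) V₂)
  have hΦt : ∀ (a : V₁) (b : V₂) (φ : Module.Dual k V₁), Φ (a ⊗ₜ[k] b) φ = φ a • b := by
    intro a b φ
    simp only [Φ, LinearEquiv.trans_apply, TensorProduct.congr_tmul, LinearEquiv.refl_apply,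
      dualTensorHomEquiv, dualTensorHomEquivOfBasis_apply, dualTensorHom_apply,
      Module.evalEquiv_apply, Module.Dual.eval_apply, LinearEquiv.ofBijective_apply]
  have hKEY : ∀ (x : V₁ ⊗[k] V₂) (φ : Module.Dual k V₁),
      Φ (TensorProduct.map f₁ f₂ x) φ = f₂ (Φ x (F φ)) := by
    intro x φ
    induction x using TensorProduct.induction_on with
    | zero => simp
    | tmul a b =>
        rw [TensorProduct.map_tmul, hΦt, hΦt, map_smul, hF]
        rw [LinearMap.dualMap_apply]
    | add x y hx hy => simp [hx, hy]
  have hf₂inv : (f₂ ^ (p - 1)) * f₂ = 1 := by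
    rw [← pow_succ, Nat.sub_add_cancel hp.one_lt.le, h₂]
  let L : (LinearMap.ker (TensorProduct.map f₁ f₂ - 1)) →ₗ[k] (Fin m → V₂) :=
    { toFun := fun x => fun i => Φ (x : V₁ ⊗[k] V₂) (ξ i),
      map_add' := fun x y => funext fun i => by simp,
      map_smul' := fun c x => funext fun i => by simp }
  have hLker : ∀ x : LinearMap.ker (TensorProduct.map f₁ f₂ - 1), L x = 0 → x = 0 := by
    rintro ⟨x, hx⟩ hLx
    have hfix : TensorProduct.map f₁ f₂ x = x := by
      have h3 := LinearMap.mem_ker.mp hx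
      rwa [LinearMap.sub_apply, Module.End.one_apply, sub_eq_zero] at h3
    have hstep : ∀ φ, Φ x (F φ) = (f₂ ^ (p - 1)) (Φ x φ) := by
      intro φ
      have h4 := hKEY x φ
      rw [hfix] at h4
      have h5 := congrArg (f₂ ^ (p - 1)) h4
      rw [← Module.End.mul_apply, hf₂inv, Module.End.one_apply] at h5
      exact h5.symm
    have hpowstep : ∀ (n : ℕ) (φ), Φ x ((F ^ n) φ) = ((f₂ ^ (p - 1)) ^ n) (Φ x φ) := by
      intro n
      induction n with
      | zero => intro φ; simp
      | succ n ih =>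
          intro φ
          rw [pow_succ, Module.End.mul_apply, pow_succ, Module.End.mul_apply, ih (F φ), hstep φ]
    have hgen : ∀ i, Φ x (ξ i) = 0 := fun i => congrFun hLx i
    have hall : Φ x = 0 := by
      refine LinearMap.ext fun φ => ?_
      have hφ : φ ∈ Submodule.span k
          (Set.range fun z : ℕ × Fin m => (F ^ z.1) (ξ z.2)) := by
        rw [hspan]; exact Submodule.mem_top
      have hle : Submodule.span k (Set.range fun z : ℕ × Fin m => (F ^ z.1) (ξ z.2)) ≤
          LinearMap.ker (Φ x) := by
        rw [Submodule.span_le]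
        rintro _ ⟨⟨n, i⟩, rfl⟩
        rw [SetLike.mem_coe, LinearMap.mem_ker, hpowstep n (ξ i), hgen i, map_zero]
      exact LinearMap.mem_ker.mp (hle hφ)
    have hx0 : x = 0 := by
      have := Φ.injective (by rw [hall, map_zero] : Φ x = Φ 0)
      exact this
    exact Subtype.ext hx0
  have hinj : Function.Injective L :=
    LinearMap.ker_eq_bot.mp ((Submodule.eq_bot_iff _).mpr fun x hx => hLker x hx)
  calc Module.finrank k (LinearMap.ker (TensorProduct.map f₁ f₂ - 1))
      ≤ Module.finrank k (Fin m → V₂) := LinearMap.finrank_le_finrank_of_injective hinj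
    _ = m * Module.finrank k V₂ := by
        rw [Module.finrank_pi_fintype, Finset.sum_const, Finset.card_univ, Fintype.card_fin,
          smul_eq_mul]
    _ ≤ Module.finrank k V₂ * ⨆ μ : k, Module.finrank k (LinearMap.ker (f₁ - μ • 1)) := by
        rw [mul_comm]
        exact Nat.mul_le_mul_left _ (hm.trans_eq hsup)

end OneSide

section Main

variable {k : Type*} [Field k]
variable {V₁ V₂ : Type*} [AddCommGroup V₁] [Module k V₁] [AddCommGroup V₂] [Module k V₂]

lemma tmap_pow (f₁ : Module.End k V₁) (f₂ : Module.End k V₂) (n : ℕ) :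
    (TensorProduct.map f₁ f₂) ^ n = TensorProduct.map (f₁ ^ n) (f₂ ^ n) := by
  induction n with
  | zero =>
      rw [pow_zero, pow_zero, pow_zero]
      exact (TensorProduct.map_id).symm
  | succ n ih =>
      rw [pow_succ, pow_succ, pow_succ, Module.End.mul_eq_comp, Module.End.mul_eq_comp,
        Module.End.mul_eq_comp, TensorProduct.map_comp, ih]

lemma swap_ker_finrank (f₁ : Module.End k V₁) (f₂ : Module.End k V₂) :
    Module.finrank k (LinearMap.ker (TensorProduct.map f₁ f₂ - 1)) =
    Module.finrank k (LinearMap.ker (TensorProduct.map f₂ f₁ - 1)) := by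
  set e := TensorProduct.comm k V₁ V₂ with he
  have hcomm : ∀ x, TensorProduct.map f₂ f₁ (e x) = e (TensorProduct.map f₁ f₂ x) := by
    intro x
    induction x using TensorProduct.induction_on with
    | zero => simp
    | tmul a b => simp [he, TensorProduct.comm_tmul]
    | add x y hx hy => simp [hx, hy]
  have hker : Submodule.map (e : V₁ ⊗[k] V₂ →ₗ[k] V₂ ⊗[k] V₁)
      (LinearMap.ker (TensorProduct.map f₁ f₂ - 1)) =
      LinearMap.ker (TensorProduct.map f₂ f₁ - 1) := by
    ext y
    rw [Submodule.mem_map]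
    constructor
    · rintro ⟨x, hx, rfl⟩
      have h := LinearMap.mem_ker.mp hx
      rw [LinearMap.sub_apply, Module.End.one_apply, sub_eq_zero] at h
      rw [LinearMap.mem_ker, LinearMap.sub_apply, Module.End.one_apply, sub_eq_zero]
      rw [LinearEquiv.coe_coe, hcomm, h]
    · intro hy
      refine ⟨e.symm y, ?_, by simp⟩
      have h := LinearMap.mem_ker.mp hy
      rw [LinearMap.sub_apply, Module.End.one_apply, sub_eq_zero] at h
      rw [LinearMap.mem_ker, LinearMap.sub_apply, Module.End.one_apply, sub_eq_zero]
      apply e.injective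
      rw [← hcomm, e.apply_symm_apply, h]
  rw [← hker]
  exact (LinearEquiv.finrank_map_eq e _).symm

lemma coe_pow_equiv (g : V₁ ≃ₗ[k] V₁) (n : ℕ) :
    ((g ^ n : V₁ ≃ₗ[k] V₁) : V₁ →ₗ[k] V₁) = ((g : V₁ →ₗ[k] V₁) ^ n) := by
  induction n with
  | zero => rfl
  | succ n ih => rw [pow_succ, pow_succ, ← ih]; rfl

end Main

/-- Let `g₁`, `g₂` be automorphisms of order dividing a prime `p` of finite-dimensional
vector spaces `V₁`, `V₂` over an algebraically closed field `k`, and let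
`g = g₁ ⊗ g₂` act on `V₁ ⊗ V₂`. Then every eigenspace of `g` has dimension at most
`min (d₂ * maxₗ dim E_λ(g₁)) (d₁ * maxₘ dim E_μ(g₂))`. -/
theorem stmt_8 (k : Type*) [Field k] [IsAlgClosed k]
    (V₁ V₂ : Type*) [AddCommGroup V₁] [Module k V₁] [FiniteDimensional k V₁]
    [AddCommGroup V₂] [Module k V₂] [FiniteDimensional k V₂]
    (p : ℕ) (hp : p.Prime)
    (g₁ : V₁ ≃ₗ[k] V₁) (g₂ : V₂ ≃ₗ[k] V₂)
    (hg₁ : g₁ ^ p = 1) (hg₂ : g₂ ^ p = 1) :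
    ∀ ν : k,
      Module.finrank k (LinearMap.ker
        (TensorProduct.map (g₁ : V₁ →ₗ[k] V₁) (g₂ : V₂ →ₗ[k] V₂) - ν • LinearMap.id)) ≤
      min
        (Module.finrank k V₂ *
          ⨆ lam : k, Module.finrank k (LinearMap.ker ((g₁ : V₁ →ₗ[k] V₁) - lam • LinearMap.id)))
        (Module.finrank k V₁ *
          ⨆ mu : k, Module.finrank k (LinearMap.ker ((g₂ : V₂ →ₗ[k] V₂) - mu • LinearMap.id))) := by
  intro ν
  simp only [← Module.End.one_eq_id]
  set A₁ : Module.End k V₁ := (g₁ : V₁ →ₗ[k] V₁) with hA₁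
  set A₂ : Module.End k V₂ := (g₂ : V₂ →ₗ[k] V₂) with hA₂
  have h₁ : A₁ ^ p = 1 := by
    rw [hA₁, ← coe_pow_equiv, hg₁]; rfl
  have h₂ : A₂ ^ p = 1 := by
    rw [hA₂, ← coe_pow_equiv, hg₂]; rfl
  set T : Module.End k (V₁ ⊗[k] V₂) := TensorProduct.map A₁ A₂ with hT
  by_cases hν : ν ^ p = 1
  · have hν0 : ν ≠ 0 := by
      rintro rfl
      rw [zero_pow hp.ne_zero] at hν
      exact zero_ne_one hν
    set B₁ : Module.End k V₁ := ν⁻¹ • A₁ with hB₁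
    have hB₁p : B₁ ^ p = 1 := by
      rw [hB₁, _root_.smul_pow, h₁, inv_pow, hν, inv_one, one_smul]
    have hmapsmul : TensorProduct.map B₁ A₂ = ν⁻¹ • T := by
      apply TensorProduct.ext'
      intro x y
      rw [hT, hB₁]
      simp [TensorProduct.smul_tmul']
    have hker1 : LinearMap.ker (T - ν • (1 : Module.End k (V₁ ⊗[k] V₂))) =
        LinearMap.ker (TensorProduct.map B₁ A₂ - 1) := by
      have heq : TensorProduct.map B₁ A₂ - 1 =
          ν⁻¹ • (T - ν • (1 : Module.End k (V₁ ⊗[k] V₂))) := by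
        rw [hmapsmul, smul_sub, smul_smul, inv_mul_cancel₀ hν0, one_smul]
      rw [heq, LinearMap.ker_smul _ _ (inv_ne_zero hν0)]
    refine (congrArg (fun S : Submodule k (V₁ ⊗[k] V₂) => Module.finrank k S) hker1).trans_le ?_
    refine le_min ?_ ?_
    · refine le_trans (oneside hp B₁ A₂ hB₁p h₂) ?_
      have hkerB : ∀ μ : k, LinearMap.ker (B₁ - μ • 1) =
          LinearMap.ker (A₁ - (ν * μ) • 1) := by
        intro μ
        have heq : B₁ - μ • (1 : Module.End k V₁) = ν⁻¹ • (A₁ - (ν * μ) • 1) := by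
          rw [hB₁, smul_sub, smul_smul, inv_mul_cancel_left₀ hν0]
        rw [heq, LinearMap.ker_smul _ _ (inv_ne_zero hν0)]
      have hsurj : Function.Surjective (fun μ : k => ν * μ) := fun lam =>
        ⟨ν⁻¹ * lam, by field_simp⟩
      have hsupeq : (⨆ μ : k, Module.finrank k (LinearMap.ker (B₁ - μ • 1))) =
          ⨆ lam : k, Module.finrank k (LinearMap.ker (A₁ - lam • 1)) := by
        calc (⨆ μ : k, Module.finrank k (LinearMap.ker (B₁ - μ • 1)))
            = ⨆ μ : k, Module.finrank k (LinearMap.ker (A₁ - (ν * μ) • 1)) :=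
              iSup_congr fun μ => by rw [hkerB]
          _ = ⨆ lam : k, Module.finrank k (LinearMap.ker (A₁ - lam • 1)) :=
              hsurj.iSup_comp (fun lam => Module.finrank k (LinearMap.ker (A₁ - lam • 1)))
      rw [hsupeq]
    · rw [swap_ker_finrank B₁ A₂]
      exact oneside hp A₂ B₁ h₂ hB₁p
  · have hbot : LinearMap.ker (T - ν • (1 : Module.End k (V₁ ⊗[k] V₂))) = ⊥ := by
      rw [Submodule.eq_bot_iff]
      intro x hx
      have hTx : T x = ν • x := by
        have h := LinearMap.mem_ker.mp hx
        rwa [LinearMap.sub_apply, LinearMap.smul_apply, Module.End.one_apply, sub_eq_zero] at h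
      have hTn : ∀ n : ℕ, (T ^ n) x = ν ^ n • x := by
        intro n
        induction n with
        | zero => simp
        | succ n ih =>
            rw [pow_succ, Module.End.mul_apply, hTx, map_smul, ih, smul_smul, pow_succ']
      have hTp : (T ^ p) x = x := by
        rw [hT, tmap_pow, h₁, h₂]
        simp [TensorProduct.map_id]
      rw [hTn p] at hTp
      by_contra hx0
      apply hν
      exact smul_left_injective k hx0 (a₁ := ν ^ p) (a₂ := 1) (by simp only []; rw [one_smul]; exact hTp)
    refine (congrArg (fun S : Submodule k (V₁ ⊗[k] V₂) => Module.finrank k S) hbot).trans_le ?_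
    simp
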